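/- arXiv:0809.2236 — 4 statements merged into one kernel-verified Lean document; each statement's English description precedes it below -/
import Mathlib

section
/- Let π be a permutation of {0,1,...,n-1} with π(0) = 0. Then π⁻¹ (equivalently, π) can be written as a composition of at most |π| + ς(π) transpositions each of the form (0,i), where |π| is the size of the support of π and ς(π) is the number of (nontrivial) disjoint cycles of π. -/
open Equiv Equiv.Perm

section aux
variable {α : Type*} [Fintype α] [DecidableEq α]

/-- Merging a fixed point `z` into a cycle `π` via `π * swap z a` gives a cycle. -/
lemma aux_merge (z a : α) (π : Perm α) (hc : π.IsCycle) (hz : π z = z) (ha : π a ≠ a) :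
    (π * Equiv.swap z a).IsCycle ∧ (π * Equiv.swap z a).support = insert z π.support := by
  have haz : a ≠ z := by rintro rfl; exact ha hz
  set τ := π * Equiv.swap z a with hτ
  have hτz : τ z = π a := by simp [hτ]
  have hτa : τ a = z := by simp [hτ, hz]
  have hπaz : π a ≠ z := fun h => haz (π.injective (h.trans hz.symm))
  have hπaa : π a ≠ a := ha
  have hτx : ∀ x, x ≠ z → x ≠ a → τ x = π x := by
    intro x h1 h2
    simp [hτ, Equiv.swap_apply_of_ne_of_ne h1 h2]
  have hzsupp : z ∉ π.support := by simp [Equiv.Perm.mem_support, hz]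
  have key : ∀ k : ℕ, Equiv.Perm.SameCycle τ z ((π ^ k) a) := by
    intro k
    induction k with
    | zero =>
      refine ⟨-1, ?_⟩
      simp only [zpow_neg, zpow_one, pow_zero, Perm.one_apply]
      rw [Equiv.Perm.inv_eq_iff_eq]
      exact hτa.symm
    | succ k ih =>
      by_cases hk : (π ^ k) a = a
      · rw [pow_succ', Perm.mul_apply, hk, ← hτz]
        exact ⟨1, by simp⟩
      · have hmem : (π ^ k) a ∈ π.support := by
          rw [Equiv.Perm.pow_apply_mem_support, Equiv.Perm.mem_support]; exact ha
        have hne_z : (π ^ k) a ≠ z := fun h => hzsupp (h ▸ hmem)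
        have : τ ((π ^ k) a) = (π ^ (k + 1)) a := by
          rw [hτx _ hne_z hk, pow_succ', Perm.mul_apply]
        exact ih.trans (this ▸ ⟨1, by simp⟩)
  constructor
  · refine ⟨z, by rw [hτz]; exact hπaz, fun y hy => ?_⟩
    rcases eq_or_ne y z with rfl | hyz
    · exact Equiv.Perm.SameCycle.refl _ _
    rcases eq_or_ne y a with rfl | hya
    · simpa using key 0
    · have : π y ≠ y := by rw [← hτx y hyz hya]; exact hy
      obtain ⟨k, hk⟩ := hc.exists_pow_eq ha this
      exact hk ▸ key k
  · ext x
    simp only [Equiv.Perm.mem_support, Finset.mem_insert]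
    rcases eq_or_ne x z with rfl | hxz
    · simp [hτz, hπaz]
    rcases eq_or_ne x a with rfl | hxa
    · simp [hτa, haz, Ne.symm haz, ha]
    · simp [hτx x hxz hxa, hxz]

/-- Reduction: a cycle through `z` of support size `s` is a product of `s - 1` flips. -/
lemma aux_reduce (z : α) : ∀ m : ℕ, ∀ π : Perm α, π.support.card ≤ m → π.IsCycle →
    π z ≠ z →
    ∃ L : List (Perm α), (∀ τ ∈ L, ∃ i, i ≠ z ∧ τ = Equiv.swap z i) ∧
      L.prod = π⁻¹ ∧ L.length + 1 ≤ π.support.card := by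
  intro m
  induction m with
  | zero =>
    intro π hcard hc hπz
    exfalso
    have : z ∈ π.support := Equiv.Perm.mem_support.2 hπz
    have := Finset.card_pos.2 ⟨z, this⟩
    omega
  | succ m ih =>
    intro π hcard hc hπz
    by_cases h2 : π (π z) = z
    · have hswap : π = Equiv.swap z (π z) := hc.eq_swap_of_apply_apply_eq_self hπz h2
      set w := π z with hw
      refine ⟨[Equiv.swap z w], ?_, ?_, ?_⟩
      · rintro τ hτ
        simp only [List.mem_singleton] at hτ
        exact ⟨w, hπz, hτ⟩
      · rw [List.prod_singleton, hswap, Equiv.swap_inv]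
      · rw [hswap, Equiv.Perm.card_support_swap (Ne.symm hπz)]
        simp
    · set σ := π * Equiv.swap z (π z) with hσ
      have hσinv : σ⁻¹ = Equiv.swap z (π z) * π⁻¹ := by
        rw [hσ, mul_inv_rev, Equiv.swap_inv]
      have hσc : σ.IsCycle := by
        have hx : π⁻¹ (π z) ≠ π z := by
          rw [show π⁻¹ (π z) = z from Equiv.Perm.inv_eq_iff_eq.2 rfl]; exact Ne.symm hπz
        have hffx : π⁻¹ (π⁻¹ (π z)) ≠ π z := by
          rw [show π⁻¹ (π z) = z from Equiv.Perm.inv_eq_iff_eq.2 rfl]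
          intro h
          exact h2 (by rw [← h]; simp)
        have := hc.inv.swap_mul hx hffx
        rw [show π⁻¹ (π z) = z from Equiv.Perm.inv_eq_iff_eq.2 rfl, Equiv.swap_comm, ← hσinv] at this
        simpa using this.inv
      have hσz : σ z = π (π z) := by simp [hσ]
      have hσsupp : σ.support = π.support.erase (π z) := by
        ext x
        simp only [Equiv.Perm.mem_support, Finset.mem_erase]
        rcases eq_or_ne x (π z) with rfl | hxpz
        · simp [hσ]
        rcases eq_or_ne x z with rfl | hxz
        · simp [hσz, h2, Ne.symm hπz, hπz]
        · simp [hσ, Equiv.swap_apply_of_ne_of_ne hxz hxpz, hxpz]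
      have hpzsupp : π z ∈ π.support := by
        rw [Equiv.Perm.mem_support]
        exact fun h => hπz (π.injective h)
      have hσcard : σ.support.card = π.support.card - 1 := by
        rw [hσsupp, Finset.card_erase_of_mem hpzsupp]
      have hzpos : 1 ≤ π.support.card :=
        Finset.card_pos.2 ⟨z, Equiv.Perm.mem_support.2 hπz⟩
      obtain ⟨L', hform, hprod, hlen⟩ := ih σ (by omega) hσc (by rw [hσz]; exact h2)
      refine ⟨Equiv.swap z (π z) :: L', ?_, ?_, ?_⟩
      · rintro τ hτ
        rcases List.mem_cons.1 hτ with rfl | hτ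
        · exact ⟨π z, hπz, rfl⟩
        · exact hform τ hτ
      · rw [List.prod_cons, hprod, hσinv, ← mul_assoc, Equiv.swap_mul_self, one_mul]
      · simp only [List.length_cons]
        omega

/-- A cycle avoiding `z` of support size `s` is a product of at most `s + 1` flips. -/
lemma aux_cycle (z : α) (σ : Perm α) (hc : σ.IsCycle) (hz : σ z = z) :
    ∃ L : List (Perm α), (∀ τ ∈ L, ∃ i, i ≠ z ∧ τ = Equiv.swap z i) ∧
      L.prod = σ⁻¹ ∧ L.length ≤ σ.support.card + 1 := by
  obtain ⟨a, ha, -⟩ := id hc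
  have haz : a ≠ z := fun h => ha (by rw [h, hz])
  obtain ⟨hτc, hτsupp⟩ := aux_merge z a σ hc hz ha
  set τ := σ * Equiv.swap z a with hτ
  have hzτ : τ z ≠ z := by
    simp only [hτ, Perm.mul_apply, Equiv.swap_apply_left]
    intro h
    exact haz (σ.injective (h.trans hz.symm))
  obtain ⟨L', hform, hprod, hlen⟩ := aux_reduce z τ.support.card τ le_rfl hτc hzτ
  have hzsupp : z ∉ σ.support := by simp [Equiv.Perm.mem_support, hz]
  have hcard : τ.support.card = σ.support.card + 1 := by
    rw [hτsupp, Finset.card_insert_of_notMem hzsupp]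
  refine ⟨Equiv.swap z a :: L', ?_, ?_, ?_⟩
  · rintro ρ hρ
    rcases List.mem_cons.1 hρ with rfl | hρ
    · exact ⟨a, haz, rfl⟩
    · exact hform ρ hρ
  · rw [List.prod_cons, hprod, hτ, mul_inv_rev, Equiv.swap_inv, ← mul_assoc,
      Equiv.swap_mul_self, one_mul]
  · simp only [List.length_cons]
    omega

end aux

/-- A permutation `π` of `{0,1,...,n-1}` fixing `0` can be written (via `π⁻¹`) as a
composition of at most `|π| + ς(π)` transpositions of the form `(0,i)`, where `|π|` is
the size of the support and `ς(π)` the number of nontrivial disjoint cycles. -/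
theorem stmt_9 (n : ℕ) (hn : 0 < n) (π : Equiv.Perm (Fin n)) (hπ : π ⟨0, hn⟩ = ⟨0, hn⟩) :
    ∃ L : List (Equiv.Perm (Fin n)),
      (∀ τ ∈ L, ∃ i : Fin n, i ≠ ⟨0, hn⟩ ∧ τ = Equiv.swap ⟨0, hn⟩ i) ∧
      L.prod = π⁻¹ ∧
      L.length ≤ π.support.card + Multiset.card π.cycleType := by
  revert hπ
  induction π using Equiv.Perm.cycle_induction_on with
  | base_one =>
    intro _
    exact ⟨[], by simp, by simp, by simp⟩
  | base_cycles σ hσ =>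
    intro hz
    obtain ⟨L, hform, hprod, hlen⟩ := aux_cycle _ σ hσ hz
    refine ⟨L, hform, hprod, ?_⟩
    rw [hσ.cycleType]
    simpa using hlen
  | induction_disjoint σ τ hd hc ihσ ihτ =>
    intro hz
    have hzz : σ ((⟨0, hn⟩ : Fin n)) = ⟨0, hn⟩ ∧ τ ((⟨0, hn⟩ : Fin n)) = ⟨0, hn⟩ := by
      rcases hd ⟨0, hn⟩ with h | h
      · refine ⟨h, ?_⟩
        have := hz
        rw [Perm.mul_apply] at this
        exact σ.injective (by rw [this, h])
      · refine ⟨?_, h⟩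
        have := hz
        rw [Perm.mul_apply, h] at this
        exact this
    obtain ⟨L1, hf1, hp1, hl1⟩ := ihσ hzz.1
    obtain ⟨L2, hf2, hp2, hl2⟩ := ihτ hzz.2
    refine ⟨L2 ++ L1, ?_, ?_, ?_⟩
    · intro ρ hρ
      rcases List.mem_append.1 hρ with h | h
      · exact hf2 ρ h
      · exact hf1 ρ h
    · rw [List.prod_append, hp2, hp1, mul_inv_rev]
    · rw [List.length_append, Equiv.Perm.Disjoint.cycleType_mul hd, Equiv.Perm.Disjoint.card_support_mul hd, Multiset.card_add]
      omega
end

section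
/- Let σ be a cycle and let i₁, i₂ be two distinct elements of its support. Then exactly one of the following holds: (1) σ(i₁,i₂) is a product of two disjoint nontrivial cycles whose supports partition the support of σ; (2) σ(i₁,i₂) is a cycle whose support is the support of σ minus one of i₁, i₂; (3) σ = (i₁,i₂) and σ(i₁,i₂) is the identity. -/
open Equiv Equiv.Perm

/-- For a cycle `σ` and distinct `i₁, i₂` in its support, one of exactly three
mutually exclusive cases holds for `σ(i₁,i₂)`: it splits into two disjoint cycles
partitioning `Sp(σ)`, or it is a cycle on `Sp(σ)` minus one of `i₁, i₂`, or
`σ = (i₁,i₂)` and `σ(i₁,i₂)` is the identity. -/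
theorem stmt_11 {α : Type*} [Fintype α] [DecidableEq α] (σ : Equiv.Perm α)
    (hσ : σ.IsCycle) (i₁ i₂ : α) (h₁ : i₁ ∈ σ.support) (h₂ : i₂ ∈ σ.support)
    (hne : i₁ ≠ i₂) :
    (∃ τ₁ τ₂ : Equiv.Perm α, τ₁.IsCycle ∧ τ₂.IsCycle ∧ τ₁.Disjoint τ₂ ∧
        σ * Equiv.swap i₁ i₂ = τ₁ * τ₂ ∧
        τ₁.support ∪ τ₂.support = σ.support ∧ Disjoint τ₁.support τ₂.support) ∨
    (∃ i, (i = i₁ ∨ i = i₂) ∧ (σ * Equiv.swap i₁ i₂).IsCycle ∧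
        (σ * Equiv.swap i₁ i₂).support = σ.support \ {i}) ∨
    (σ = Equiv.swap i₁ i₂ ∧ σ * Equiv.swap i₁ i₂ = 1) := by
  classical
  have hm1 : σ i₁ ≠ i₁ := Equiv.Perm.mem_support.mp h₁
  have hm2 : σ i₂ ≠ i₂ := Equiv.Perm.mem_support.mp h₂
  by_cases hA : σ i₁ = i₂
  · by_cases hB : σ i₂ = i₁
    · -- case 3: σ = swap i₁ i₂
      right; right
      have hffx : σ (σ i₁) = i₁ := by rw [hA, hB]
      have hswap : σ = Equiv.swap i₁ i₂ := by
        ext x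
        rcases eq_or_ne x i₁ with rfl | hx1
        · rw [Equiv.swap_apply_left, hA]
        rcases eq_or_ne x i₂ with rfl | hx2
        · rw [Equiv.swap_apply_right, hB]
        rw [Equiv.swap_apply_of_ne_of_ne hx1 hx2]
        by_contra hx
        obtain ⟨i, hi⟩ := hσ.sameCycle hm1 hx
        rcases Equiv.Perm.zpow_apply_eq_of_apply_apply_eq_self hffx i with h | h
        · rw [hi] at h; exact hx1 h
        · rw [hi, hA] at h; exact hx2 h
      exact ⟨hswap, by rw [hswap, Equiv.swap_mul_self]⟩
    · -- case 2a: i = i₂ disappears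
      right; left
      have hffx : σ (σ i₂) ≠ i₂ := by
        intro h
        exact hB (σ.injective (by rw [h, hA]))
      have hre : σ * Equiv.swap i₁ i₂ = Equiv.swap i₂ (σ i₂) * σ := by
        rw [Equiv.mul_swap_eq_swap_mul, hA]
      refine ⟨i₂, Or.inr rfl, ?_, ?_⟩
      · rw [hre]; exact hσ.swap_mul hm2 hffx
      · rw [hre]; exact Equiv.Perm.support_swap_mul_eq σ i₂ hffx
  · by_cases hB : σ i₂ = i₁
    · -- case 2b: i = i₁ disappears
      right; left
      have hffx : σ (σ i₁) ≠ i₁ := by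
        intro h
        exact hA (σ.injective (by rw [h, hB]))
      have hre : σ * Equiv.swap i₁ i₂ = Equiv.swap i₁ (σ i₁) * σ := by
        rw [Equiv.mul_swap_eq_swap_mul, hB, Equiv.swap_comm]
      refine ⟨i₁, Or.inl rfl, ?_, ?_⟩
      · rw [hre]; exact hσ.swap_mul hm1 hffx
      · rw [hre]; exact Equiv.Perm.support_swap_mul_eq σ i₁ hffx
    · -- split case
      left
      set τ := σ * Equiv.swap i₁ i₂ with hτdef
      have hτ1 : τ i₁ = σ i₂ := by
        simp [hτdef, Equiv.Perm.mul_apply, Equiv.swap_apply_left]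
      have hτ2 : τ i₂ = σ i₁ := by
        simp [hτdef, Equiv.Perm.mul_apply, Equiv.swap_apply_right]
      have hτx : ∀ x, x ≠ i₁ → x ≠ i₂ → τ x = σ x := by
        intro x hx1 hx2
        simp [hτdef, Equiv.Perm.mul_apply, Equiv.swap_apply_of_ne_of_ne hx1 hx2]
      have hτm1 : τ i₁ ≠ i₁ := by rw [hτ1]; exact hB
      have hτm2 : τ i₂ ≠ i₂ := by rw [hτ2]; exact hA
      have hsupp : τ.support = σ.support := by
        ext x
        rcases eq_or_ne x i₁ with rfl | hx1
        · simp [Equiv.Perm.mem_support, hτm1, hm1]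
        rcases eq_or_ne x i₂ with rfl | hx2
        · simp [Equiv.Perm.mem_support, hτm2, hm2]
        · simp [Equiv.Perm.mem_support, hτx x hx1 hx2]
      set n := orderOf σ with hndef
      have hpow1 : ∀ j : ℕ, 0 < j → j < n → (σ ^ j) i₁ ≠ i₁ := by
        intro j hj0 hjn hcon
        have h1 : σ ^ j = 1 := (hσ.pow_eq_one_iff' hm1).mpr hcon
        have h2 : n ∣ j := orderOf_dvd_of_pow_eq_one h1
        exact absurd (Nat.le_of_dvd hj0 h2) (not_le.mpr hjn)
      obtain ⟨k₀, hk₀n, hk₀⟩ : ∃ i < n, (σ ^ i) i₁ = i₂ :=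
        (hσ.sameCycle hm1 hm2).exists_pow_eq'
      have hex : ∃ j : ℕ, (σ ^ j) i₁ = i₂ := ⟨k₀, hk₀⟩
      set k := Nat.find hex with hkdef
      have hk : (σ ^ k) i₁ = i₂ := Nat.find_spec hex
      have hkmin : ∀ j < k, (σ ^ j) i₁ ≠ i₂ := fun j hj => Nat.find_min hex hj
      have hk0 : 0 < k := by
        rcases Nat.eq_zero_or_pos k with h | h
        · exfalso; apply hne; rw [h, pow_zero] at hk; exact hk
        · exact h
      have hkn : k < n := lt_of_le_of_lt (Nat.find_le hk₀) hk₀n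
      have hF1 : ∀ j, 0 < j → j ≤ k → (σ ^ j) i₁ ≠ i₁ := by
        intro j hj0 hjk hcon
        rcases lt_or_eq_of_le hjk with hlt | rfl
        · apply hkmin (k - j) (by omega)
          have h3 : (σ ^ (k - j)) ((σ ^ j) i₁) = (σ ^ k) i₁ := by
            rw [← Equiv.Perm.mul_apply, ← pow_add]
            congr 2
            omega
          rw [hcon, hk] at h3
          exact h3
        · rw [hcon] at hk; exact hne hk
      have hL1 : ∀ j, 1 ≤ j → j ≤ k → (τ ^ j) i₂ = (σ ^ j) i₁ := by
        intro j hj1 hjk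
        induction j with
        | zero => omega
        | succ m ih =>
          rcases Nat.eq_zero_or_pos m with rfl | hm
          · simpa using hτ2
          · have hmk : m < k := by omega
            rw [pow_succ', Equiv.Perm.mul_apply, ih hm hmk.le,
              hτx _ (hF1 m hm hmk.le) (hkmin m hmk), ← Equiv.Perm.mul_apply, ← pow_succ']
      have hL2 : ∀ m : ℕ, ∃ j, 1 ≤ j ∧ j ≤ k ∧ (τ ^ m) i₂ = (σ ^ j) i₁ := by
        intro m
        induction m with
        | zero => exact ⟨k, hk0, le_rfl, by rw [pow_zero, Equiv.Perm.one_apply, hk]⟩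
        | succ m ih =>
          obtain ⟨j, hj1, hjk, hjm⟩ := ih
          rcases eq_or_lt_of_le hjk with rfl | hjlt
          · exact ⟨1, le_rfl, hk0, by
              rw [pow_succ', Equiv.Perm.mul_apply, hjm, hk, hτ2, pow_one]⟩
          · exact ⟨j + 1, by omega, by omega, by
              rw [pow_succ', Equiv.Perm.mul_apply, hjm,
                hτx _ (hF1 j hj1 hjk) (hkmin j hjlt), ← Equiv.Perm.mul_apply, ← pow_succ']⟩
      have hns' : ¬ τ.SameCycle i₁ i₂ := by
        intro hsc
        obtain ⟨m, _, hm⟩ := hsc.symm.exists_pow_eq'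
        obtain ⟨j, hj1, hjk, hjm⟩ := hL2 m
        rw [hm] at hjm
        exact hF1 j hj1 hjk hjm.symm
      have hL4 : ∀ m, 1 ≤ m → k + m ≤ n → (τ ^ m) i₁ = (σ ^ (k + m)) i₁ := by
        intro m hm1' hmn
        induction m with
        | zero => omega
        | succ m ih =>
          rcases Nat.eq_zero_or_pos m with rfl | hm
          · rw [pow_one, hτ1, ← hk, ← Equiv.Perm.mul_apply, ← pow_succ']
          · have hne1 : (σ ^ (k + m)) i₁ ≠ i₁ := hpow1 (k + m) (by omega) (by omega)
            have hne2 : (σ ^ (k + m)) i₁ ≠ i₂ := by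
              intro hcon
              have h5 : (σ ^ k) ((σ ^ m) i₁) = (σ ^ k) i₁ := by
                rw [← Equiv.Perm.mul_apply, ← pow_add, hcon, hk]
              have h6 := (σ ^ k).injective h5
              exact hpow1 m hm (by omega) h6
            have h7 : k + (m + 1) = (k + m) + 1 := by omega
            rw [pow_succ', Equiv.Perm.mul_apply, ih hm (by omega), hτx _ hne1 hne2,
              ← Equiv.Perm.mul_apply, ← pow_succ', h7]
      have hcov : ∀ x ∈ σ.support, τ.SameCycle i₁ x ∨ τ.SameCycle i₂ x := by
        intro x hx
        obtain ⟨j, hjn, hj⟩ := (hσ.sameCycle hm1 (Equiv.Perm.mem_support.mp hx)).exists_pow_eq'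
        rcases Nat.eq_zero_or_pos j with rfl | hj0
        · left
          rw [pow_zero, Equiv.Perm.one_apply] at hj
          rw [← hj]
        rcases le_or_gt j k with hjk | hkj
        · right
          exact ⟨(j : ℤ), by rw [zpow_natCast, hL1 j hj0 hjk, hj]⟩
        · left
          refine ⟨((j - k : ℕ) : ℤ), ?_⟩
          have h8 : k + (j - k) = j := by omega
          rw [zpow_natCast, hL4 (j - k) (by omega) (by omega), h8, hj]
      have i₁s : i₁ ∈ τ.support := Equiv.Perm.mem_support.mpr hτm1
      have i₂s : i₂ ∈ τ.support := Equiv.Perm.mem_support.mpr hτm2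
      have hdisj : (τ.cycleOf i₁).Disjoint (τ.cycleOf i₂) := by
        intro x
        by_cases h1 : τ.SameCycle i₁ x
        · right
          apply Equiv.Perm.cycleOf_apply_of_not_sameCycle
          intro h2
          exact hns' (h1.trans h2.symm)
        · left
          exact Equiv.Perm.cycleOf_apply_of_not_sameCycle h1
      refine ⟨τ.cycleOf i₁, τ.cycleOf i₂, Equiv.Perm.isCycle_cycleOf τ hτm1,
        Equiv.Perm.isCycle_cycleOf τ hτm2, hdisj, ?_, ?_,
        Equiv.Perm.disjoint_iff_disjoint_support.mp hdisj⟩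
      · ext x
        change τ x = (τ.cycleOf i₁) ((τ.cycleOf i₂) x)
        rw [Equiv.Perm.cycleOf_apply τ i₂ x]
        by_cases h2 : τ.SameCycle i₂ x
        · rw [if_pos h2, Equiv.Perm.cycleOf_apply]
          have hnx : ¬ τ.SameCycle i₁ (τ x) := by
            intro h1
            have h2' : τ.SameCycle i₂ (τ x) := h2.trans ⟨1, by simp⟩
            exact hns' (h1.trans h2'.symm)
          rw [if_neg hnx]
        · rw [if_neg h2, Equiv.Perm.cycleOf_apply]
          by_cases h1 : τ.SameCycle i₁ x
          · rw [if_pos h1]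
          · rw [if_neg h1]
            by_contra hxx
            have hxs : x ∈ σ.support := by
              rw [← hsupp]
              exact Equiv.Perm.mem_support.mpr hxx
            rcases hcov x hxs with h | h
            exacts [h1 h, h2 h]
      · rw [← hsupp]
        ext y
        simp only [Finset.mem_union, Equiv.Perm.mem_support_cycleOf_iff]
        constructor
        · rintro (⟨h, _⟩ | ⟨h, _⟩)
          · exact h.mem_support_iff.mp i₁s
          · exact h.mem_support_iff.mp i₂s
        · intro hy
          rcases hcov y (hsupp ▸ hy) with h | h
          · exact Or.inl ⟨h, i₁s⟩
          · exact Or.inr ⟨h, i₂s⟩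
end

section
/- Every permutation of {0,1,...,n-1} is a composition of at most ⌊3(n-1)/2⌋ transpositions from the set T = {(0,i) : 1 ≤ i ≤ n-1}, and ⌊3(n-1)/2⌋ is the least number t with this property. -/
open Equiv Equiv.Perm Finset

namespace Star14

variable {α : Type*} [Fintype α] [DecidableEq α] [LinearOrder α]

/-- The set of minimal representatives of cycles of `π` avoiding `z`. -/
def CC (z : α) (π : Perm α) : Finset α :=
  Finset.univ.filter fun x =>
    x ∈ π.support ∧ ¬π.SameCycle z x ∧ ∀ y, π.SameCycle x y → x ≤ y

/-- The potential: number of moved points other than `z`, plus number of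
cycles avoiding `z`.  This is the star-graph distance to the identity. -/
def Phi (z : α) (π : Perm α) : ℕ :=
  (π.support.erase z).card + (CC z π).card

lemma mem_CC {z : α} {π : Perm α} {x : α} :
    x ∈ CC z π ↔ x ∈ π.support ∧ ¬π.SameCycle z x ∧ ∀ y, π.SameCycle x y → x ≤ y := by
  simp [CC]

lemma sameCycle_of_pow {f : Perm α} {x y : α} {k : ℕ} (h : (f ^ k) x = y) :
    f.SameCycle x y :=
  ⟨(k : ℤ), by rwa [zpow_natCast]⟩

lemma sc_eq_of_fixed {f : Perm α} {x y : α} (h : f.SameCycle x y) (hy : f y = y) :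
    x = y := by
  obtain ⟨j, hj⟩ := h
  have h2 : (f ^ (-j)) ((f ^ j) x) = (f ^ (-j)) y := by rw [hj]
  rw [← Perm.mul_apply, ← zpow_add, neg_add_cancel, zpow_zero, Perm.one_apply] at h2
  rw [h2, zpow_apply_eq_self_of_apply_eq_self hy]

lemma mul_swap_apply_of_ne {z i : α} {π : Perm α} {u : α} (huz : u ≠ z) (hui : u ≠ i) :
    (π * Equiv.swap z i) u = π u := by
  rw [Perm.mul_apply, Equiv.swap_apply_of_ne_of_ne huz hui]

section Transfer

variable {z i : α} {π : Perm α} {x : α}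

lemma pow_transfer (hxz : ¬(π * Equiv.swap z i).SameCycle x z)
    (hxi : ¬(π * Equiv.swap z i).SameCycle x i) :
    ∀ k : ℕ, ((π * Equiv.swap z i) ^ k) x = (π ^ k) x := by
  intro k
  induction k with
  | zero => simp
  | succ k ih =>
    have huz : ((π * Equiv.swap z i) ^ k) x ≠ z := fun h => hxz (sameCycle_of_pow h)
    have hui : ((π * Equiv.swap z i) ^ k) x ≠ i := fun h => hxi (sameCycle_of_pow h)
    rw [pow_succ', Perm.mul_apply, mul_swap_apply_of_ne huz hui, ih, ← Perm.mul_apply,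
      ← pow_succ']

lemma sameCycle_transfer (hxz : ¬(π * Equiv.swap z i).SameCycle x z)
    (hxi : ¬(π * Equiv.swap z i).SameCycle x i) {y : α} :
    (π * Equiv.swap z i).SameCycle x y ↔ π.SameCycle x y := by
  constructor
  · intro h
    obtain ⟨k, -, hk⟩ := h.exists_pow_eq'
    exact sameCycle_of_pow ((pow_transfer hxz hxi k).symm.trans hk)
  · intro h
    obtain ⟨k, -, hk⟩ := h.exists_pow_eq'
    exact sameCycle_of_pow ((pow_transfer hxz hxi k).trans hk)

lemma mem_CC_of_mem_CC (hx : x ∈ CC z (π * Equiv.swap z i))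
    (hxi : ¬(π * Equiv.swap z i).SameCycle x i) : x ∈ CC z π := by
  obtain ⟨hs, hz, hmin⟩ := mem_CC.1 hx
  have hxz : ¬(π * Equiv.swap z i).SameCycle x z := fun h => hz h.symm
  have hxne : x ≠ z := fun h => hz (h ▸ SameCycle.refl _ _)
  have hxnei : x ≠ i := fun h => hxi (h ▸ SameCycle.refl _ _)
  refine mem_CC.2 ⟨?_, ?_, ?_⟩
  · rw [mem_support] at hs ⊢
    rwa [← mul_swap_apply_of_ne hxne hxnei]
  · intro h
    exact hz (((sameCycle_transfer hxz hxi).2 h.symm).symm)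
  · intro y hy
    exact hmin y ((sameCycle_transfer hxz hxi).2 hy)

end Transfer

section Steps

variable (z : α)

lemma exists_decrease (π : Perm α) (hπ : π ≠ 1) :
    ∃ i, i ≠ z ∧ Phi z (π * Equiv.swap z i) < Phi z π := by
  by_cases hz : π z = z
  · -- z fixed; merge the cycle of some moved point into z's cycle
    have hsupp : π.support.Nonempty := by
      rw [Finset.nonempty_iff_ne_empty, Ne, support_eq_empty_iff]; exact hπ
    obtain ⟨i, hi⟩ := hsupp
    have hii : π i ≠ i := mem_support.1 hi
    have hiz : i ≠ z := fun h => hii (by rw [h, hz])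
    refine ⟨i, hiz, ?_⟩
    set σ := π * Equiv.swap z i with hσ
    have hσi : σ i = z := by rw [hσ, Perm.mul_apply, Equiv.swap_apply_right, hz]
    have hσz : σ z = π i := by rw [hσ, Perm.mul_apply, Equiv.swap_apply_left]
    have hSCiz : σ.SameCycle i z := sameCycle_of_pow (k := 1) (by simpa using hσi)
    have hm : σ.support.erase z = π.support.erase z := by
      ext x
      simp only [Finset.mem_erase, mem_support]
      constructor
      · rintro ⟨hxz, hxs⟩
        refine ⟨hxz, ?_⟩
        by_cases hxi : x = i
        · subst hxi; exact hii
        · rwa [hσ, mul_swap_apply_of_ne hxz hxi] at hxs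
      · rintro ⟨hxz, hxs⟩
        refine ⟨hxz, ?_⟩
        by_cases hxi : x = i
        · subst hxi; rw [hσi]; exact hiz.symm
        · rwa [hσ, mul_swap_apply_of_ne hxz hxi]
    have hzfix : ∀ y, π.SameCycle z y → y = z := fun y h => sc_eq_of_fixed h.symm hz
    have hSCzpow : ∀ k : ℕ, σ.SameCycle z ((π ^ k) i) := by
      intro k
      induction k with
      | zero => simpa using hSCiz.symm
      | succ k ih =>
        by_cases hu : (π ^ k) i = i
        · have he : (π ^ (k + 1)) i = σ z := by
            rw [pow_succ', Perm.mul_apply, hu, hσz]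
          rw [he]
          exact sameCycle_of_pow (k := 1) (by simp)
        · have huz : (π ^ k) i ≠ z := fun h =>
            hiz (hzfix i (sameCycle_of_pow (f := π) h).symm)
          have he : σ ((π ^ k) i) = (π ^ (k + 1)) i := by
            rw [hσ, mul_swap_apply_of_ne huz hu, pow_succ', Perm.mul_apply]
          exact ih.trans (he ▸ sameCycle_of_pow (k := 1) (by simp))
    set O := π.support.filter (fun y => π.SameCycle i y) with hO
    have hiO : i ∈ O := Finset.mem_filter.2 ⟨hi, SameCycle.refl _ _⟩
    set x₀ := O.min' ⟨i, hiO⟩ with hx₀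
    have hx₀O : x₀ ∈ O := Finset.min'_mem _ _
    obtain ⟨hx₀s, hSCix₀⟩ := Finset.mem_filter.1 hx₀O
    have hx₀CC : x₀ ∈ CC z π := by
      refine mem_CC.2 ⟨hx₀s, ?_, ?_⟩
      · intro h
        rw [hzfix x₀ h] at hx₀s
        exact (mem_support.1 hx₀s) hz
      · intro y hy
        by_cases hys : y ∈ π.support
        · exact Finset.min'_le _ _ (Finset.mem_filter.2 ⟨hys, hSCix₀.trans hy⟩)
        · rw [sc_eq_of_fixed hy (notMem_support.1 hys)]
    have hSCσzx₀ : σ.SameCycle z x₀ := by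
      obtain ⟨k, -, hk⟩ := hSCix₀.exists_pow_eq'
      exact hk ▸ hSCzpow k
    have hsub : CC z σ ⊆ (CC z π).erase x₀ := by
      intro x hx
      obtain ⟨hs, hzx, hmin⟩ := mem_CC.1 hx
      have hxi : ¬σ.SameCycle x i := fun h => hzx (h.trans hSCiz).symm
      refine Finset.mem_erase.2 ⟨?_, mem_CC_of_mem_CC hx hxi⟩
      rintro rfl
      exact hzx hSCσzx₀
    have hc1 := Finset.card_le_card hsub
    have hc2 := Finset.card_erase_of_mem hx₀CC
    have hc3 : 0 < (CC z π).card := Finset.card_pos.2 ⟨x₀, hx₀CC⟩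
    unfold Phi
    rw [hm]
    omega
  · -- z moved; send the value at z home
    set i := π z with hi
    have hiz : i ≠ z := hz
    have hii : π i ≠ i := fun h => hz (π.injective (hi ▸ h))
    refine ⟨i, hiz, ?_⟩
    set σ := π * Equiv.swap z i with hσ
    have hσi : σ i = i := by rw [hσ, Perm.mul_apply, Equiv.swap_apply_right, ← hi]
    have hm : σ.support.erase z = (π.support.erase z).erase i := by
      ext x
      simp only [Finset.mem_erase, mem_support]
      constructor
      · rintro ⟨hxz, hxs⟩
        have hxi : x ≠ i := fun h => hxs (h ▸ hσi)
        refine ⟨hxi, hxz, ?_⟩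
        rwa [hσ, mul_swap_apply_of_ne hxz hxi] at hxs
      · rintro ⟨hxi, hxz, hxs⟩
        refine ⟨hxz, ?_⟩
        rwa [hσ, mul_swap_apply_of_ne hxz hxi]
    have hsub : CC z σ ⊆ CC z π := by
      intro x hx
      obtain ⟨hs, hzx, hmin⟩ := mem_CC.1 hx
      have hxi : ¬σ.SameCycle x i := by
        intro h
        have : x = i := sc_eq_of_fixed h hσi
        subst this
        exact (mem_support.1 hs) hσi
      exact mem_CC_of_mem_CC hx hxi
    have hc1 := Finset.card_le_card hsub
    have hiε : i ∈ π.support.erase z := Finset.mem_erase.2 ⟨hiz, mem_support.2 hii⟩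
    have hc2 := Finset.card_erase_of_mem hiε
    have hc3 : 0 < (π.support.erase z).card := Finset.card_pos.2 ⟨i, hiε⟩
    unfold Phi
    rw [hm]
    omega

lemma Phi_mul_swap_le (π : Perm α) {i : α} (hiz : i ≠ z) :
    Phi z (π * Equiv.swap z i) ≤ Phi z π + 1 := by
  set σ := π * Equiv.swap z i with hσ
  by_cases hi : π i = i
  · have hσz : σ z = i := by rw [hσ, Perm.mul_apply, Equiv.swap_apply_left, hi]
    have hSCzi : σ.SameCycle z i := sameCycle_of_pow (k := 1) (by simpa using hσz)
    have hm : σ.support.erase z ⊆ insert i (π.support.erase z) := by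
      intro x hx
      rcases Finset.mem_erase.1 hx with ⟨hxz, hxs⟩
      by_cases hxi : x = i
      · simp [hxi]
      · refine Finset.mem_insert_of_mem (Finset.mem_erase.2 ⟨hxz, ?_⟩)
        rw [mem_support] at hxs ⊢
        rwa [hσ, mul_swap_apply_of_ne hxz hxi] at hxs
    have hc : CC z σ ⊆ CC z π := by
      intro x hx
      have hzx := (mem_CC.1 hx).2.1
      have hxi : ¬σ.SameCycle x i := fun h => hzx (hSCzi.trans h.symm)
      exact mem_CC_of_mem_CC hx hxi
    have h1 := Finset.card_le_card hm
    have h2 := Finset.card_insert_le i (π.support.erase z)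
    have h3 := Finset.card_le_card hc
    unfold Phi
    omega
  · have hm : σ.support.erase z ⊆ π.support.erase z := by
      intro x hx
      rcases Finset.mem_erase.1 hx with ⟨hxz, hxs⟩
      refine Finset.mem_erase.2 ⟨hxz, ?_⟩
      by_cases hxi : x = i
      · subst hxi; exact mem_support.2 hi
      · rw [mem_support] at hxs ⊢
        rwa [hσ, mul_swap_apply_of_ne hxz hxi] at hxs
    have hsplit := Finset.card_filter_add_card_filter_not
      (s := CC z σ) (p := fun x => σ.SameCycle x i)
    have h1 : ((CC z σ).filter fun x => σ.SameCycle x i).card ≤ 1 := by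
      rw [Finset.card_le_one]
      intro a ha b hb
      obtain ⟨haC, hai⟩ := Finset.mem_filter.1 ha
      obtain ⟨hbC, hbi⟩ := Finset.mem_filter.1 hb
      have hab : σ.SameCycle a b := hai.trans hbi.symm
      exact le_antisymm ((mem_CC.1 haC).2.2 b hab) ((mem_CC.1 hbC).2.2 a hab.symm)
    have h2 : ((CC z σ).filter fun x => ¬σ.SameCycle x i) ⊆ CC z π := by
      intro x hx
      obtain ⟨hxC, hxi⟩ := Finset.mem_filter.1 hx
      exact mem_CC_of_mem_CC hxC hxi
    have h3 := Finset.card_le_card hm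
    have h4 := Finset.card_le_card h2
    unfold Phi
    omega

lemma Phi_inv (π : Perm α) : Phi z π⁻¹ = Phi z π := by
  have hCC : CC z π⁻¹ = CC z π := by
    ext x
    simp only [mem_CC, support_inv, sameCycle_inv]
  unfold Phi
  rw [support_inv, hCC]

lemma Phi_one : Phi z (1 : Perm α) = 0 := by
  simp [Phi, CC]

lemma Phi_prod_le (L : List (Perm α))
    (hL : ∀ τ ∈ L, ∃ i, i ≠ z ∧ τ = Equiv.swap z i) :
    Phi z L.prod ≤ L.length := by
  induction L with
  | nil => simp [Phi_one]
  | cons τ L ih =>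
    obtain ⟨i, hiz, rfl⟩ := hL τ List.mem_cons_self
    have h1 : Phi z (Equiv.swap z i * L.prod) ≤ Phi z L.prod + 1 := by
      have : (Equiv.swap z i * L.prod)⁻¹ = L.prod⁻¹ * Equiv.swap z i := by
        rw [mul_inv_rev, Equiv.swap_inv]
      calc Phi z (Equiv.swap z i * L.prod)
          = Phi z (L.prod⁻¹ * Equiv.swap z i) := by rw [← Phi_inv, this]
        _ ≤ Phi z L.prod⁻¹ + 1 := Phi_mul_swap_le z _ hiz
        _ = Phi z L.prod + 1 := by rw [Phi_inv]
    simp only [List.prod_cons, List.length_cons]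
    have h2 := ih (fun τ h => hL τ (List.mem_cons_of_mem _ h))
    omega
  
lemma two_mul_card_CC_le (π : Perm α) :
    2 * (CC z π).card ≤ (π.support.erase z).card := by
  have hpair : ∀ x ∈ CC z π, ∀ u ∈ ({x, π x} : Finset α), π.SameCycle x u := by
    intro x hx u hu
    rcases Finset.mem_insert.1 hu with rfl | h
    · exact SameCycle.refl _ _
    · rw [Finset.mem_singleton.1 h]
      exact sameCycle_of_pow (k := 1) (by simp)
  have key : (CC z π).biUnion (fun x => {x, π x}) ⊆ π.support.erase z := by
    intro u hu
    obtain ⟨x, hx, hu⟩ := Finset.mem_biUnion.1 hu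
    obtain ⟨hxs, hzx, -⟩ := mem_CC.1 hx
    have hSCxu := hpair x hx u hu
    refine Finset.mem_erase.2 ⟨?_, ?_⟩
    · rintro rfl; exact hzx hSCxu.symm
    · rcases Finset.mem_insert.1 hu with rfl | h
      · exact hxs
      · rw [Finset.mem_singleton.1 h]; exact apply_mem_support.2 hxs
  have hdisj : ∀ x ∈ CC z π, ∀ y ∈ CC z π, x ≠ y →
      Disjoint ({x, π x} : Finset α) {y, π y} := by
    intro x hx y hy hxy
    rw [Finset.disjoint_left]
    intro u hux huy
    have hxy' : π.SameCycle x y := (hpair x hx u hux).trans (hpair y hy u huy).symm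
    exact hxy (le_antisymm ((mem_CC.1 hx).2.2 y hxy') ((mem_CC.1 hy).2.2 x hxy'.symm))
  have hcard := Finset.card_biUnion hdisj
  have h2 : ∀ x ∈ CC z π, ({x, π x} : Finset α).card = 2 := by
    intro x hx
    have : x ∉ ({π x} : Finset α) := by
      simp only [Finset.mem_singleton]
      exact fun h => (mem_support.1 (mem_CC.1 hx).1) h.symm
    rw [Finset.card_insert_of_notMem this, Finset.card_singleton]
  calc 2 * (CC z π).card = ∑ x ∈ CC z π, 2 := by
        rw [Finset.sum_const, smul_eq_mul, mul_comm]
    _ = ∑ x ∈ CC z π, ({x, π x} : Finset α).card :=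
        Finset.sum_congr rfl (fun x hx => (h2 x hx).symm)
    _ = ((CC z π).biUnion fun x => {x, π x}).card := hcard.symm
    _ ≤ _ := Finset.card_le_card key

lemma Phi_le (π : Perm α) : Phi z π ≤ 3 * (Fintype.card α - 1) / 2 := by
  have h1 : (π.support.erase z).card ≤ Fintype.card α - 1 := by
    have : π.support.erase z ⊆ Finset.univ.erase z :=
      Finset.erase_subset_erase _ (Finset.subset_univ _)
    have h2 := Finset.card_le_card this
    rwa [Finset.card_erase_of_mem (Finset.mem_univ _), Finset.card_univ] at h2
  have h2 := two_mul_card_CC_le z π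
  unfold Phi
  omega

lemma exists_list : ∀ (N : ℕ) (π : Perm α), Phi z π ≤ N →
    ∃ L : List (Perm α), (∀ τ ∈ L, ∃ i, i ≠ z ∧ τ = Equiv.swap z i) ∧
      L.prod = π ∧ L.length ≤ N := by
  intro N
  induction N with
  | zero =>
    intro π hπ
    by_cases h : π = 1
    · exact ⟨[], by simp, by simp [h], by simp⟩
    · obtain ⟨i, -, hlt⟩ := exists_decrease z π h
      omega
  | succ N ih =>
    intro π hπ
    by_cases h : π = 1
    · exact ⟨[], by simp, by simp [h], by simp⟩
    · obtain ⟨i, hiz, hlt⟩ := exists_decrease z π h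
      obtain ⟨L, hL1, hL2, hL3⟩ := ih (π * Equiv.swap z i) (by omega)
      refine ⟨L ++ [Equiv.swap z i], ?_, ?_, ?_⟩
      · intro τ hτ
        rcases List.mem_append.1 hτ with h' | h'
        · exact hL1 τ h'
        · simp at h'
          exact ⟨i, hiz, h'⟩
      · rw [List.prod_append, hL2]
        simp [mul_assoc]
      · simp only [List.length_append, List.length_cons, List.length_nil]
        omega

end Steps


section Extremal

lemma sameCycle_involution {α : Type*} {f : Equiv.Perm α} (hf : ∀ x, f (f x) = x) {x y : α} :
    f.SameCycle x y ↔ y = x ∨ y = f x := by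
  constructor
  · rintro ⟨j, hj⟩
    have hpow : ∀ j : ℤ, f ^ j = 1 ∨ f ^ j = f := by
      have hmul : f * f = 1 := Equiv.ext fun a => hf a
      have hinv : f⁻¹ = f := inv_eq_of_mul_eq_one_right hmul
      intro j
      induction j using Int.induction_on with
      | zero => exact Or.inl rfl
      | succ k ih =>
        rcases ih with h | h
        · right; rw [zpow_add_one, h, one_mul]
        · left; rw [zpow_add_one, h, hmul]
      | pred k ih =>
        rcases ih with h | h
        · right; rw [zpow_sub_one, h, one_mul, hinv]
        · left; rw [zpow_sub_one, h, hinv, hmul]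
    rcases hpow j with h | h
    · left; rw [← hj, h, Perm.one_apply]
    · right; rw [← hj, h]
  · rintro (rfl | rfl)
    · exact Equiv.Perm.SameCycle.refl _ _
    · exact ⟨1, by simp⟩

lemma extremal_even (n : ℕ) (hn : 0 < n) (hpar : n % 2 = 0) :
    ∃ π : Equiv.Perm (Fin n), 3 * (n - 1) / 2 ≤ Phi (⟨0, hn⟩ : Fin n) π := by
  have hbnd : ∀ x : Fin n, x.val + 1 - 2 * (x.val % 2) < n := by
    intro x; have := x.isLt; omega
  set f : Fin n → Fin n := fun x => ⟨x.val + 1 - 2 * (x.val % 2), hbnd x⟩ with hfdef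
  have hinv : ∀ x, f (f x) = x := by
    intro x
    apply Fin.ext
    show (x.val + 1 - 2 * (x.val % 2)) + 1 - 2 * ((x.val + 1 - 2 * (x.val % 2)) % 2) = x.val
    omega
  set π : Equiv.Perm (Fin n) := Function.Involutive.toPerm f hinv with hπdef
  have hval : ∀ x : Fin n, (π x).val = x.val + 1 - 2 * (x.val % 2) := fun x => rfl
  have hmove : ∀ x : Fin n, π x ≠ x := by
    intro x h
    have h1 := congrArg Fin.val h
    rw [hval] at h1
    have := x.isLt
    omega
  have hsupp : π.support = Finset.univ := by
    ext x; simp [Equiv.Perm.mem_support, hmove x]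
  have hSC : ∀ x y : Fin n, π.SameCycle x y ↔ y = x ∨ y = π x :=
    fun x y => sameCycle_involution hinv
  set z : Fin n := ⟨0, hn⟩ with hz
  have hzval : z.val = 0 := rfl
  have hπz : (π z).val = 1 := by rw [hval, hzval]
  have hCC : ∀ x : Fin n, x ∈ CC z π ↔ x.val % 2 = 0 ∧ 2 ≤ x.val := by
    intro x
    rw [mem_CC]
    have hx := x.isLt
    constructor
    · rintro ⟨-, hnz, hmin⟩
      have h1 : x ≠ z := fun h => hnz (h ▸ Equiv.Perm.SameCycle.refl _ _)
      have h2 : x ≠ π z := fun h => hnz ((hSC z x).2 (Or.inr h))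
      have h1' : x.val ≠ 0 := fun h => h1 (Fin.ext (by rw [hzval]; exact h))
      have h2' : x.val ≠ 1 := fun h => h2 (Fin.ext (by rw [hπz]; exact h))
      have h3 : x.val ≤ (π x).val := hmin (π x) ((hSC x (π x)).2 (Or.inr rfl))
      rw [hval] at h3
      constructor <;> omega
    · rintro ⟨he, h2⟩
      refine ⟨Equiv.Perm.mem_support.2 (hmove x), ?_, ?_⟩
      · intro h
        rcases (hSC z x).1 h with h' | h'
        · have := congrArg Fin.val h'
          omega
        · have := congrArg Fin.val h'
          rw [hπz] at this
          omega
      · intro y hy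
        rcases (hSC x y).1 hy with rfl | rfl
        · exact le_refl _
        · show x.val ≤ (π x).val
          rw [hval]; omega
  have hCCcard : (CC z π).card = (n - 2) / 2 := by
    rw [← Finset.card_range ((n - 2) / 2)]
    refine Finset.card_bij' (fun x _ => (x.val - 2) / 2)
      (fun j hj => ⟨2 * j + 2, by have := Finset.mem_range.1 hj; omega⟩) ?_ ?_ ?_ ?_
    · intro x hx
      have h1 := (hCC x).1 hx
      have h2 := x.isLt
      exact Finset.mem_range.2 (show (x.val - 2) / 2 < (n - 2) / 2 by omega)
    · intro j hj
      have h1 := Finset.mem_range.1 hj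
      refine (hCC _).2 ⟨?_, ?_⟩
      · show (2 * j + 2) % 2 = 0
        omega
      · show 2 ≤ 2 * j + 2
        omega
    · intro x hx
      have h1 := (hCC x).1 hx
      apply Fin.ext
      show 2 * ((x.val - 2) / 2) + 2 = x.val
      omega
    · intro j hj
      have h1 := Finset.mem_range.1 hj
      show (2 * j + 2 - 2) / 2 = j
      omega
  have hscard : (π.support.erase z).card = n - 1 := by
    rw [hsupp, Finset.card_erase_of_mem (Finset.mem_univ _), Finset.card_univ,
      Fintype.card_fin]
  refine ⟨π, ?_⟩
  unfold Phi
  rw [hscard, hCCcard]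
  omega

lemma extremal_odd (n : ℕ) (hn : 0 < n) (hpar : n % 2 = 1) :
    ∃ π : Equiv.Perm (Fin n), 3 * (n - 1) / 2 ≤ Phi (⟨0, hn⟩ : Fin n) π := by
  have hbnd : ∀ x : Fin n, x.val + 2 * (x.val % 2) - 1 < n := by
    intro x; have := x.isLt; omega
  set f : Fin n → Fin n := fun x => ⟨x.val + 2 * (x.val % 2) - 1, hbnd x⟩ with hfdef
  have hinv : ∀ x, f (f x) = x := by
    intro x
    apply Fin.ext
    show (x.val + 2 * (x.val % 2) - 1) + 2 * ((x.val + 2 * (x.val % 2) - 1) % 2) - 1 = x.val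
    omega
  set π : Equiv.Perm (Fin n) := Function.Involutive.toPerm f hinv with hπdef
  have hval : ∀ x : Fin n, (π x).val = x.val + 2 * (x.val % 2) - 1 := fun x => rfl
  set z : Fin n := ⟨0, hn⟩ with hz
  have hzval : z.val = 0 := rfl
  have hπz : π z = z := Fin.ext (by rw [hval, hzval])
  have hmove : ∀ x : Fin n, x ≠ z → π x ≠ x := by
    intro x hx h
    have h1 := congrArg Fin.val h
    rw [hval] at h1
    have h2 : x.val ≠ 0 := fun h' => hx (Fin.ext (by rw [hzval]; exact h'))
    omega
  have hsupp : π.support = Finset.univ.erase z := by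
    ext x
    simp only [Equiv.Perm.mem_support, Finset.mem_erase, Finset.mem_univ, and_true]
    constructor
    · intro h hxz
      exact h (hxz ▸ hπz)
    · exact hmove x
  have hSC : ∀ x y : Fin n, π.SameCycle x y ↔ y = x ∨ y = π x :=
    fun x y => sameCycle_involution hinv
  have hCC : ∀ x : Fin n, x ∈ CC z π ↔ x.val % 2 = 1 := by
    intro x
    rw [mem_CC]
    have hx := x.isLt
    constructor
    · rintro ⟨hs, hnz, hmin⟩
      have h1 : x ≠ z := fun h => hnz (h ▸ Equiv.Perm.SameCycle.refl _ _)
      have h1' : x.val ≠ 0 := fun h => h1 (Fin.ext (by rw [hzval]; exact h))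
      have h3 : x.val ≤ (π x).val := hmin (π x) ((hSC x (π x)).2 (Or.inr rfl))
      rw [hval] at h3
      omega
    · intro hodd
      have h1' : x.val ≠ 0 := by omega
      have h1 : x ≠ z := fun h => h1' (by rw [h, hzval])
      refine ⟨Equiv.Perm.mem_support.2 (hmove x h1), ?_, ?_⟩
      · intro h
        rcases (hSC z x).1 h with h' | h'
        · exact h1 h'
        · rw [hπz] at h'
          exact h1 h'
      · intro y hy
        rcases (hSC x y).1 hy with rfl | rfl
        · exact le_refl _
        · show x.val ≤ (π x).val
          rw [hval]; omega
  have hCCcard : (CC z π).card = (n - 1) / 2 := by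
    rw [← Finset.card_range ((n - 1) / 2)]
    refine Finset.card_bij' (fun x _ => (x.val - 1) / 2)
      (fun j hj => ⟨2 * j + 1, by have := Finset.mem_range.1 hj; omega⟩) ?_ ?_ ?_ ?_
    · intro x hx
      have h1 := (hCC x).1 hx
      have h2 := x.isLt
      exact Finset.mem_range.2 (show (x.val - 1) / 2 < (n - 1) / 2 by omega)
    · intro j hj
      have h1 := Finset.mem_range.1 hj
      refine (hCC _).2 ?_
      show (2 * j + 1) % 2 = 1
      omega
    · intro x hx
      have h1 := (hCC x).1 hx
      apply Fin.ext
      show 2 * ((x.val - 1) / 2) + 1 = x.val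
      omega
    · intro j hj
      have h1 := Finset.mem_range.1 hj
      show (2 * j + 1 - 1) / 2 = j
      omega
  have hscard : (π.support.erase z).card = n - 1 := by
    rw [hsupp, Finset.erase_idem, Finset.card_erase_of_mem (Finset.mem_univ _),
      Finset.card_univ, Fintype.card_fin]
  refine ⟨π, ?_⟩
  unfold Phi
  rw [hscard, hCCcard]
  omega

lemma exists_extremal (n : ℕ) (hn : 0 < n) :
    ∃ π : Equiv.Perm (Fin n), 3 * (n - 1) / 2 ≤ Phi (⟨0, hn⟩ : Fin n) π := by
  rcases Nat.mod_two_eq_zero_or_one n with h | h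
  · exact extremal_even n hn h
  · exact extremal_odd n hn h

end Extremal

end Star14

/-- Every permutation of `{0,...,n-1}` is a composition of at most `⌊3(n-1)/2⌋`
transpositions from `T = {(0,i) : 1 ≤ i ≤ n-1}`, and `⌊3(n-1)/2⌋` is the least `t`
with this property. -/
theorem stmt_14 (n : ℕ) (hn : 0 < n) :
    (∀ π : Equiv.Perm (Fin n), ∃ L : List (Equiv.Perm (Fin n)),
      (∀ τ ∈ L, ∃ i : Fin n, i ≠ ⟨0, hn⟩ ∧ τ = Equiv.swap ⟨0, hn⟩ i) ∧
      L.prod = π ∧ L.length ≤ 3 * (n - 1) / 2) ∧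
    (∀ t : ℕ,
      (∀ π : Equiv.Perm (Fin n), ∃ L : List (Equiv.Perm (Fin n)),
        (∀ τ ∈ L, ∃ i : Fin n, i ≠ ⟨0, hn⟩ ∧ τ = Equiv.swap ⟨0, hn⟩ i) ∧
        L.prod = π ∧ L.length ≤ t) → 3 * (n - 1) / 2 ≤ t) := by
  constructor
  · intro π
    obtain ⟨L, h1, h2, h3⟩ := Star14.exists_list (⟨0, hn⟩ : Fin n)
      (Star14.Phi (⟨0, hn⟩ : Fin n) π) π (le_refl _)
    refine ⟨L, h1, h2, h3.trans ?_⟩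
    have := Star14.Phi_le (⟨0, hn⟩ : Fin n) π
    rwa [Fintype.card_fin] at this
  · intro t ht
    obtain ⟨π, hπ⟩ := Star14.exists_extremal n hn
    obtain ⟨L, h1, h2, h3⟩ := ht π
    have h4 := Star14.Phi_prod_le (⟨0, hn⟩ : Fin n) L h1
    rw [h2] at h4
    omega
end

section
/- If a simple connected graph is neither a path nor a cycle, then it has a spanning tree that is not a path (equivalently, a spanning tree containing a vertex of degree at least three). -/
open SimpleGraph Walk

universe u

section Lemmas

variable {V : Type u}

/-- Any cycle contains an edge not incident to a given vertex `v`. -/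
lemma cycle_exists_edge_avoid {G : SimpleGraph V} {u : V} (p : G.Walk u u) (hp : p.IsCycle)
    (v : V) : ∃ e ∈ p.edges, v ∉ e := by
  classical
  by_cases hv : v ∈ p.support
  · -- rotate so cycle starts at v
    have hq : (p.rotate v hv).IsCycle := hp.rotate hv
    have hedges : ((p.rotate v hv).edges : List (Sym2 V)) ~r p.edges := p.rotate_edges v hv
    suffices h : ∃ e ∈ (p.rotate v hv).edges, v ∉ e by
      obtain ⟨e, he, hve⟩ := h
      exact ⟨e, hedges.mem_iff.mp he, hve⟩
    generalize (p.rotate v hv) = q at hq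
    clear hedges hv hp p
    cases q with
    | nil => exact absurd rfl hq.ne_nil
    | cons h r =>
      rename_i x
      cases r with
      | nil => simpa using hq.three_le_length
      | cons h' r' =>
        rename_i y
        refine ⟨s(x, y), by simp, ?_⟩
        have hnd := hq.support_nodup
        simp only [support_cons, List.tail_cons] at hnd
        have hxv : x ≠ v := by
          rw [List.nodup_cons] at hnd
          intro hxy
          exact hnd.1 (hxy ▸ r'.end_mem_support)
        have hyv : y ≠ v := by
          cases r' with
          | nil =>
            -- then edges would be [s(v,x), s(x,v)], contradicting trail
            intro _
            have := hq.isTrail.edges_nodup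
            simp [Sym2.eq_swap] at this
          | cons h'' r'' =>
            rename_i z
            simp only [support_cons, List.nodup_cons, List.mem_cons] at hnd
            intro hyv
            exact hnd.2.1 (hyv ▸ r''.end_mem_support)
        simp [hxv.symm, hyv.symm]
  · have hlen : 3 ≤ p.length := hp.three_le_length
    have hne : p.edges ≠ [] := by
      intro h
      have := p.length_edges
      rw [h] at this
      simp at this
      omega
    obtain ⟨e, he⟩ := List.exists_mem_of_ne_nil _ hne
    refine ⟨e, he, fun hve => ?_⟩
    induction e with
    | h a b =>
      rcases Sym2.mem_iff.mp hve with rfl | rfl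
      · exact hv (p.fst_mem_support_of_mem_edges he)
      · exact hv (p.snd_mem_support_of_mem_edges he)

lemma reachable_of_walk_delete {G : SimpleGraph V} {x y : V}
    (h : (G \ SimpleGraph.fromEdgeSet {s(x, y)}).Reachable x y) :
    ∀ {u w : V}, (p : G.Walk u w) → (G \ SimpleGraph.fromEdgeSet {s(x, y)}).Reachable u w := by
  intro u w p
  induction p with
  | nil => rfl
  | cons hadj q ih =>
    rename_i a b c
    refine Reachable.trans ?_ ih
    by_cases he : s(a, b) = s(x, y)
    · rw [Sym2.eq_iff] at he
      rcases he with ⟨rfl, rfl⟩ | ⟨rfl, rfl⟩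
      · exact h
      · exact h.symm
    · exact Adj.reachable (by simp [sdiff_adj, fromEdgeSet_adj, he, hadj, hadj.ne])

lemma connected_delete_edge {G : SimpleGraph V} {x y : V} (hG : G.Connected)
    (h : (G \ SimpleGraph.fromEdgeSet {s(x, y)}).Reachable x y) :
    (G \ SimpleGraph.fromEdgeSet {s(x, y)}).Connected := by
  haveI := hG.nonempty
  refine ⟨fun u w => ?_⟩
  obtain ⟨p⟩ := hG.preconnected u w
  exact reachable_of_walk_delete h p

lemma edgeSet_delete_edge {G : SimpleGraph V} {x y : V} :
    (G \ SimpleGraph.fromEdgeSet {s(x, y)}).edgeSet = G.edgeSet \ {s(x, y)} := by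
  rw [edgeSet_sdiff, edgeSet_fromEdgeSet, edgeSet_sdiff_sdiff_isDiag]

/-- If `v` has at most one neighbor, walks between vertices other than `v` can avoid `v`. -/
lemma walk_avoid (n : ℕ) : ∀ {G : SimpleGraph V} {v u w : V},
    (G.neighborSet v).Subsingleton → u ≠ v → w ≠ v → ∀ (p : G.Walk u w), p.length ≤ n →
    ∃ q : G.Walk u w, v ∉ q.support := by
  induction n with
  | zero =>
    intro G v u w _ hu _ p hp
    cases p with
    | nil => exact ⟨Walk.nil, by simpa using Ne.symm hu⟩
    | cons h q => simp at hp
  | succ n ih =>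
    intro G v u w hss hu hw p hp
    cases p with
    | nil => exact ⟨Walk.nil, by simpa using Ne.symm hu⟩
    | cons h q =>
      rename_i t
      by_cases ht : t = v
      · subst ht
        -- q : G.Walk v w ; w ≠ v so q is a cons
        cases q with
        | nil => exact absurd rfl hw
        | cons h' q' =>
          rename_i s
          have hus : u = s := hss h.symm h'
          subst hus
          have hq' : q'.length ≤ n := by
            simp only [length_cons] at hp; omega
          exact ih hss hu hw q' hq'
      · obtain ⟨q', hq'⟩ := ih hss ht hw q (by simp only [length_cons] at hp; omega)
        refine ⟨Walk.cons h q', ?_⟩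
        simp only [support_cons, List.mem_cons, not_or]
        exact ⟨fun hh => hu hh.symm, hq'⟩

/-- Transfer a walk avoiding `v` to the induced subgraph on `{u // u ≠ v}`. -/
lemma walk_transfer {G : SimpleGraph V} {v : V} :
    ∀ {x y : V} (p : G.Walk x y) (_ : v ∉ p.support) (hx : x ≠ v) (hy : y ≠ v),
    (G.comap (Subtype.val : {u : V // u ≠ v} → V)).Reachable ⟨x, hx⟩ ⟨y, hy⟩ := by
  intro x y p
  induction p with
  | nil => intro _ hx hy; rfl
  | cons h q ih =>
    rename_i a b c
    intro hs hx hy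
    simp only [support_cons, List.mem_cons, not_or] at hs
    have hb : b ≠ v := fun hbv => hs.2 (hbv ▸ q.start_mem_support)
    exact Reachable.trans (Adj.reachable (by exact h)) (ih hs.2 hb hy)

/-- Spanning tree preserving three given edges at a vertex. -/
lemma exists_tree_le [Finite V] (n : ℕ) :
    ∀ (G : SimpleGraph V), G.edgeSet.ncard ≤ n → G.Connected →
    ∀ (v a b c : V), G.Adj v a → G.Adj v b → G.Adj v c →
    ∃ T, T ≤ G ∧ T.IsTree ∧ T.Adj v a ∧ T.Adj v b ∧ T.Adj v c := by
  induction n with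
  | zero =>
    intro G hcard _ v a b c hva _ _
    exfalso
    have : s(v, a) ∈ G.edgeSet := hva
    have hfin : G.edgeSet.Finite := Set.toFinite _
    have h0 := Set.ncard_eq_zero hfin |>.mp (Nat.le_zero.mp hcard)
    rw [h0] at this
    exact this
  | succ n ih =>
    intro G hcard hG v a b c hva hvb hvc
    by_cases hac : G.IsAcyclic
    · exact ⟨G, le_refl _, ⟨hG, hac⟩, hva, hvb, hvc⟩
    · rw [IsAcyclic] at hac
      push_neg at hac
      obtain ⟨u, p, hp⟩ := hac
      obtain ⟨e, hep, hve⟩ := cycle_exists_edge_avoid p hp v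
      induction e with
      | h x y =>
        have hxy : G.Adj x y := p.adj_of_mem_edges hep
        simp only [Sym2.mem_iff, not_or] at hve
        set G' := G \ SimpleGraph.fromEdgeSet {s(x, y)} with hG'
        have hreach : G'.Reachable x y :=
          (adj_and_reachable_delete_edges_iff_exists_cycle.mpr ⟨u, p, hp, hep⟩).2
        have hconn : G'.Connected := connected_delete_edge hG hreach
        have hcard' : G'.edgeSet.ncard ≤ n := by
          have hlt : G'.edgeSet.ncard < G.edgeSet.ncard := by
            rw [edgeSet_delete_edge]
            exact Set.ncard_diff_singleton_lt_of_mem (G.mem_edgeSet.mpr hxy) (Set.toFinite _)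
          omega
        have hadj' : ∀ z, G.Adj v z → G'.Adj v z := by
          intro z hz
          rw [hG', sdiff_adj, fromEdgeSet_adj]
          refine ⟨hz, ?_⟩
          rintro ⟨h1, -⟩
          rw [Set.mem_singleton_iff, Sym2.eq_iff] at h1
          rcases h1 with ⟨rfl, rfl⟩ | ⟨rfl, rfl⟩
          · exact hve.1 rfl
          · exact hve.2 rfl
        obtain ⟨T, hT1, hT2, hT3⟩ := ih G' hcard' hconn v a b c
          (hadj' a hva) (hadj' b hvb) (hadj' c hvc)
        exact ⟨T, hT1.trans sdiff_le, hT2, hT3⟩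

end Lemmas

/-- A connected graph with max degree ≤ 2 and a vertex of degree ≤ 1 is a path graph,
with the low-degree vertex an endpoint. -/
lemma path_classification : ∀ (n : ℕ) {V : Type u} [Fintype V] [DecidableEq V]
    (G : SimpleGraph V), Fintype.card V = n → G.Connected →
    (∀ u, (G.neighborSet u).ncard ≤ 2) → ∀ v : V, (G.neighborSet v).ncard ≤ 1 →
    ∃ e : G ≃g SimpleGraph.pathGraph n, (e v : Fin n).val = 0 := by
  intro n
  induction n with
  | zero =>
    intro V _ _ G hcard hG _ v _
    exact absurd hcard (by haveI := hG.nonempty; simp [Fintype.card_ne_zero])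
  | succ n ih =>
    intro V _ _ G hcard hG hdeg2 v hv1
    rcases Nat.eq_zero_or_pos n with rfl | hn
    · -- single vertex
      haveI : Subsingleton V := by
        rw [← Fintype.card_le_one_iff_subsingleton, hcard]
      refine ⟨⟨Fintype.equivFinOfCardEq hcard, ?_⟩, by omega⟩
      intro x y
      constructor
      · intro h
        rw [pathGraph_adj] at h
        exfalso
        omega
      · intro h
        exact absurd (Subsingleton.elim x y) h.ne
    · -- n ≥ 1, so card V ≥ 2
      have hv0 : (G.neighborSet v).ncard ≠ 0 := by
        intro h0
        have hemp : G.neighborSet v = ∅ := Set.ncard_eq_zero (Set.toFinite _) |>.mp h0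
        obtain ⟨u, hu⟩ := Fintype.exists_ne_of_one_lt_card (by omega) v
        obtain ⟨p⟩ := hG.preconnected v u
        cases p with
        | nil => exact hu rfl
        | cons h q =>
          rename_i t
          have hmem : t ∈ G.neighborSet v := h
          rw [hemp] at hmem
          exact hmem
      obtain ⟨w0, hw0⟩ : ∃ w0, G.neighborSet v = {w0} :=
        Set.ncard_eq_one.mp (by omega)
      have hvw0 : G.Adj v w0 := by rw [← mem_neighborSet, hw0]; rfl
      have hw0v : w0 ≠ v := (G.ne_of_adj hvw0).symm
      have hss : (G.neighborSet v).Subsingleton := by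
        rw [hw0]; exact Set.subsingleton_singleton
      -- the graph with v removed
      set V' := {u : V // u ≠ v} with hV'
      set G' := G.comap (Subtype.val : V' → V) with hG'
      have hcard' : Fintype.card V' = n := by
        have h2 : Fintype.card {u : V // ¬ u = v} = Fintype.card V - 1 := by
          rw [Fintype.card_subtype_compl, Fintype.card_subtype_eq]
        exact h2.trans (by omega)
      have hGconn' : G'.Connected := by
        haveI : Nonempty V' := ⟨⟨w0, hw0v⟩⟩
        refine ⟨?_⟩
        rintro ⟨x, hx⟩ ⟨y, hy⟩
        obtain ⟨p⟩ := hG.preconnected x y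
        obtain ⟨q, hq⟩ := walk_avoid p.length hss hx hy p le_rfl
        exact walk_transfer q hq hx hy
      have himg : ∀ (u : V') , Subtype.val '' (G'.neighborSet u) ⊆ G.neighborSet u.val := by
        rintro u _ ⟨z, hz, rfl⟩
        exact hz
      have hncard : ∀ u : V', (G'.neighborSet u).ncard =
          (Subtype.val '' (G'.neighborSet u)).ncard := by
        intro u
        rw [Set.ncard_image_of_injective _ Subtype.val_injective]
      have hdeg2' : ∀ u : V', (G'.neighborSet u).ncard ≤ 2 := by
        intro u
        rw [hncard u]
        exact le_trans (Set.ncard_le_ncard (himg u) (Set.toFinite _)) (hdeg2 u.val)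
      have hdeg1' : (G'.neighborSet ⟨w0, hw0v⟩).ncard ≤ 1 := by
        rw [hncard ⟨w0, hw0v⟩]
        have hsub : Subtype.val '' (G'.neighborSet ⟨w0, hw0v⟩) ⊆ G.neighborSet w0 \ {v} := by
          rintro _ ⟨z, hz, rfl⟩
          exact ⟨hz, z.2⟩
        refine le_trans (Set.ncard_le_ncard hsub (Set.toFinite _)) ?_
        have hvmem : v ∈ G.neighborSet w0 := hvw0.symm
        have := Set.ncard_diff_singleton_lt_of_mem hvmem (Set.toFinite _)
        have := hdeg2 w0
        omega
      obtain ⟨f, hf0⟩ := ih G' hcard' hGconn' hdeg2' ⟨w0, hw0v⟩ hdeg1'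
      -- build the equivalence
      have hval0 : f ⟨w0, hw0v⟩ = ⟨0, by omega⟩ := Fin.ext hf0
      refine ⟨⟨⟨fun x => if h : x = v then ⟨0, Nat.succ_pos n⟩ else (f ⟨x, h⟩).succ,
        fun i => Fin.cases v (fun j => (f.symm j).val) i, ?_, ?_⟩, ?_⟩, ?_⟩
      · intro x
        by_cases h : x = v
        · simp [h]
        · simp [h]
      · intro i
        refine Fin.cases ?_ (fun j => ?_) i
        · simp
        · simp only [Fin.cases_succ]
          simp only [(f.symm j).2, ↓reduceDIte]
          simp
      · intro x y
        simp only [Equiv.coe_fn_mk]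
        by_cases hx : x = v <;> by_cases hy : y = v
        · rw [dif_pos hx, dif_pos hy, pathGraph_adj, hx, hy]
          constructor
          · intro h; exfalso; simp at h
          · intro h; exact absurd rfl h.ne
        · rw [dif_pos hx, dif_neg hy, pathGraph_adj, hx]
          simp only [Fin.val_succ]
          have hiff : G.Adj v y ↔ y = w0 := by
            rw [← mem_neighborSet, hw0, Set.mem_singleton_iff]
          rw [hiff]
          constructor
          · rintro (h | h)
            · have h0 : (f ⟨y, hy⟩ : Fin n).val = 0 := by simp at h; omega
              have heq : f ⟨y, hy⟩ = f ⟨w0, hw0v⟩ := by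
                rw [hval0]; exact Fin.ext (by simpa using h0)
              exact congrArg Subtype.val (f.injective heq)
            · exfalso; simp at h
          · intro h
            left
            have heq : (⟨y, hy⟩ : V') = ⟨w0, hw0v⟩ := Subtype.ext h
            rw [heq, hval0]
        · rw [dif_neg hx, dif_pos hy, pathGraph_adj, hy]
          simp only [Fin.val_succ]
          have hiff : G.Adj x v ↔ x = w0 := by
            rw [adj_comm, ← mem_neighborSet, hw0, Set.mem_singleton_iff]
          rw [hiff]
          constructor
          · rintro (h | h)
            · exfalso; simp at h
            · have h0 : (f ⟨x, hx⟩ : Fin n).val = 0 := by simp at h; omega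
              have heq : f ⟨x, hx⟩ = f ⟨w0, hw0v⟩ := by
                rw [hval0]; exact Fin.ext (by simpa using h0)
              exact congrArg Subtype.val (f.injective heq)
          · intro h
            right
            have heq : (⟨x, hx⟩ : V') = ⟨w0, hw0v⟩ := Subtype.ext h
            rw [heq, hval0]
        · rw [dif_neg hx, dif_neg hy, pathGraph_adj]
          simp only [Fin.val_succ]
          have hGG : G.Adj x y ↔ G'.Adj ⟨x, hx⟩ ⟨y, hy⟩ := Iff.rfl
          rw [hGG, ← f.map_rel_iff, pathGraph_adj]
          omega
      · simp

lemma degree_eq_ncard {V : Type u} [Fintype V] (G : SimpleGraph V) [DecidableRel G.Adj]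
    (v : V) : G.degree v = (G.neighborSet v).ncard := by
  classical
  have h1 : ((G.neighborFinset v : Set V)) = G.neighborSet v := by ext u; simp
  conv_rhs => rw [← h1]
  rw [Set.ncard_coe_finset]
  rfl

/-- A connected simple graph that is neither a path nor a cycle (a cycle being a
connected graph all of whose vertices have degree 2) has a spanning tree that is
not a path, and hence has a vertex of degree at least three in that tree. -/
theorem stmt_17 {V : Type*} [Fintype V] [DecidableEq V] (G : SimpleGraph V)
    [DecidableRel G.Adj] (hG : G.Connected)
    (hpath : ¬ ∃ m : ℕ, Nonempty (G ≃g SimpleGraph.pathGraph m))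
    (hcycle : ¬ ∀ v : V, G.degree v = 2) :
    ∃ T : SimpleGraph V, T ≤ G ∧ T.IsTree ∧
      (¬ ∃ m : ℕ, Nonempty (T ≃g SimpleGraph.pathGraph m)) ∧
      (∃ v u₁ u₂ u₃ : V, u₁ ≠ u₂ ∧ u₁ ≠ u₃ ∧ u₂ ≠ u₃ ∧
        T.Adj v u₁ ∧ T.Adj v u₂ ∧ T.Adj v u₃) := by
  classical
  -- there is a vertex of degree at least 3
  have hv3 : ∃ v, 3 ≤ G.degree v := by
    by_contra h
    push_neg at h
    obtain ⟨v0, hv0⟩ := not_forall.mp hcycle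
    have hdeg2 : ∀ u, (G.neighborSet u).ncard ≤ 2 := by
      intro u
      have := h u
      rw [degree_eq_ncard] at this
      omega
    have hv01 : (G.neighborSet v0).ncard ≤ 1 := by
      have h1 := h v0
      rw [degree_eq_ncard] at hv0 h1
      omega
    obtain ⟨e, -⟩ := path_classification (Fintype.card V) G rfl hG hdeg2 v0 hv01
    exact hpath ⟨Fintype.card V, ⟨e⟩⟩
  obtain ⟨v, hv⟩ := hv3
  have hcard3 : 2 < (G.neighborFinset v).card := hv
  obtain ⟨a, b, c, ha, hb, hc, hab, hac, hbc⟩ := Finset.two_lt_card_iff.mp hcard3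
  rw [mem_neighborFinset] at ha hb hc
  obtain ⟨T, hT1, hT2, hTa, hTb, hTc⟩ :=
    exists_tree_le G.edgeSet.ncard G le_rfl hG v a b c ha hb hc
  refine ⟨T, hT1, hT2, ?_, v, a, b, c, hab, hac, hbc, hTa, hTb, hTc⟩
  rintro ⟨m, ⟨e⟩⟩
  have hpa := e.map_rel_iff.mpr hTa
  have hpb := e.map_rel_iff.mpr hTb
  have hpc := e.map_rel_iff.mpr hTc
  rw [SimpleGraph.pathGraph_adj] at hpa hpb hpc
  have hab' : (e a : Fin m).val ≠ (e b : Fin m).val := by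
    intro h
    exact hab (e.toEquiv.injective (Fin.ext h))
  have hac' : (e a : Fin m).val ≠ (e c : Fin m).val := by
    intro h
    exact hac (e.toEquiv.injective (Fin.ext h))
  have hbc' : (e b : Fin m).val ≠ (e c : Fin m).val := by
    intro h
    exact hbc (e.toEquiv.injective (Fin.ext h))
  omega
end
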